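/- Let S = ⟨r₁,…,r_k⟩, d = gcd(r₁,…,r_k), n > r_k² with gcd(n,d)=1, dn ∈ S, and M_n = ⟨n, n+r₁,…,n+r_k⟩. If i ∈ Ap(S; dn) and a = i + m_S(i)·n, then for every ℓ > m_S(i), the element a has no factorization of length ℓ in M_n (equivalently a − ℓn ∉ S). -/
import Mathlib


open scoped Classical

/-- Membership in the additive submonoid of `ℕ` generated by `r 0, …, r (k-1)`. -/
def memGen {k : ℕ} (r : Fin k → ℕ) (a : ℕ) : Prop :=
  ∃ z : Fin k → ℕ, a = ∑ i, z i * r i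

/-- The Apéry set `Ap(S; x) = {m ∈ S : m - x ∉ S}` (subtraction in `ℤ`,
encoded by the guard `x ≤ m`). -/
def aperySet {k : ℕ} (r : Fin k → ℕ) (x : ℕ) : Set ℕ :=
  {m | memGen r m ∧ ¬(x ≤ m ∧ memGen r (m - x))}

/-- The set of factorization lengths of `a` in the monoid generated by `r`. -/
def lenSet {k : ℕ} (r : Fin k → ℕ) (a : ℕ) : Set ℕ :=
  {ℓ | ∃ z : Fin k → ℕ, a = ∑ i, z i * r i ∧ ℓ = ∑ i, z i}

/-- The minimum factorization length of `a` in the monoid generated by `r`. -/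
noncomputable def minLen {k : ℕ} (r : Fin k → ℕ) (a : ℕ) : ℕ :=
  sInf (lenSet r a)

/-- The generators `n, n + r 0, …, n + r (k-1)` of the shifted monoid `M_n`. -/
def shiftGen {k : ℕ} (n : ℕ) (r : Fin k → ℕ) : Fin (k + 1) → ℕ :=
  Fin.cons n (fun i => n + r i)

/-- The genus: the number of gaps of the monoid generated by `r`. -/
noncomputable def genus {k : ℕ} (r : Fin k → ℕ) : ℕ :=
  Set.ncard {m : ℕ | ¬ memGen r m}

/-- The Frobenius number: the largest gap of the monoid generated by `r`. -/
noncomputable def frob {k : ℕ} (r : Fin k → ℕ) : ℕ :=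
  sSup {m : ℕ | ¬ memGen r m}

/-- The set of pseudo-Frobenius numbers of the monoid generated by `r`. -/
def pseudoFrob {k : ℕ} (r : Fin k → ℕ) : Set ℕ :=
  {m | ¬ memGen r m ∧ ∀ x : ℕ, memGen r x → 0 < x → memGen r (m + x)}


lemma memGen_add {k : ℕ} {r : Fin k → ℕ} {a b : ℕ} (ha : memGen r a) (hb : memGen r b) :
    memGen r (a + b) := by
  obtain ⟨z, hz⟩ := ha; obtain ⟨w, hw⟩ := hb
  exact ⟨z + w, by simp [hz, hw, add_mul, Finset.sum_add_distrib]⟩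

lemma memGen_nsmul {k : ℕ} {r : Fin k → ℕ} {a : ℕ} (q : ℕ) (ha : memGen r a) :
    memGen r (q * a) := by
  obtain ⟨z, hz⟩ := ha
  exact ⟨fun i => q * z i, by rw [hz, Finset.mul_sum]; simp [mul_assoc]⟩

lemma dvd_of_memGen {k : ℕ} {r : Fin k → ℕ} {a : ℕ} (ha : memGen r a) :
    (Finset.univ.gcd r) ∣ a := by
  obtain ⟨z, hz⟩ := ha
  rw [hz]
  exact Finset.dvd_sum fun i _ => Dvd.dvd.mul_left (Finset.gcd_dvd (Finset.mem_univ i)) _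

/-- Under `n > r_k²`, `gcd(n,d) = 1`, `dn ∈ S`: if `i ∈ Ap(S; dn)` and
`a = i + m_S(i)·n`, then for every `ℓ > m_S(i)` the element `a` has no factorization of
length `ℓ` in `M_n`; equivalently `a − ℓn ∉ S` (encoded without truncation as
`¬∃ b ∈ S, a = ℓn + b`). -/
theorem no_long_factorizations {k : ℕ} (r : Fin (k + 1) → ℕ)
    (hmono : StrictMono r) (hpos : 0 < r 0)
    (d : ℕ) (hd : d = Finset.univ.gcd r)
    (n : ℕ) (hn : n > (r (Fin.last k)) ^ 2)
    (hgcd : Nat.gcd n d = 1) (hdn : memGen r (d * n))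
    (i : ℕ) (hi : i ∈ aperySet r (d * n))
    (ℓ : ℕ) (hℓ : ℓ > minLen r i) :
    (¬ ∃ z : Fin (k + 2) → ℕ,
        i + minLen r i * n = ∑ j, z j * shiftGen n r j ∧ (∑ j, z j) = ℓ) ∧
      ¬ ∃ b : ℕ, memGen r b ∧ i + minLen r i * n = ℓ * n + b := by

  obtain ⟨hiS, hiAp⟩ := hi
  set m := minLen r i with hm
  have hd0 : 0 < d := by
    have hdvd : d ∣ r 0 := hd ▸ Finset.gcd_dvd (Finset.mem_univ 0)
    rcases Nat.eq_zero_or_pos d with h | h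
    · subst h; rw [Nat.zero_dvd] at hdvd; omega
    · exact h
  have key : ¬ ∃ b : ℕ, memGen r b ∧ i + m * n = ℓ * n + b := by
    rintro ⟨b, hb, heq⟩
    set t := ℓ - m with ht
    have hℓm : ℓ = m + t := by omega
    have hit : i = t * n + b := by
      rw [hℓm, add_mul] at heq; omega
    have hdi : d ∣ i := hd ▸ dvd_of_memGen hiS
    have hdb : d ∣ b := hd ▸ dvd_of_memGen hb
    have hdtn : d ∣ t * n := by
      have h1 := Nat.dvd_sub hdi hdb
      have h2 : i - b = t * n := by omega
      rwa [h2] at h1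
    have hcop : Nat.Coprime d n := (Nat.coprime_comm.mp hgcd)
    have hdt : d ∣ t := hcop.dvd_of_dvd_mul_right hdtn
    have ht1 : 1 ≤ t := by omega
    obtain ⟨q, hq⟩ := hdt
    have hq0 : q ≠ 0 := by rintro rfl; simp at hq; omega
    obtain ⟨p, rfl⟩ : ∃ p, q = p + 1 := ⟨q - 1, by omega⟩
    have htn : t * n = d * n + p * (d * n) := by rw [hq]; ring
    rw [htn] at hit
    apply hiAp
    refine ⟨by omega, ?_⟩
    have h1 : i - d * n = p * (d * n) + b := by omega
    rw [h1]
    exact memGen_add (memGen_nsmul p hdn) hb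
  refine ⟨?_, key⟩
  rintro ⟨z, hz, hsum⟩
  apply key
  refine ⟨∑ j, z j.succ * r j, ⟨fun j => z j.succ, rfl⟩, ?_⟩
  have expand : ∑ j : Fin (k + 2), z j * shiftGen n r j
      = (∑ j : Fin (k + 2), z j) * n + ∑ j : Fin (k + 1), z j.succ * r j := by
    rw [Fin.sum_univ_succ (f := fun j : Fin (k + 2) => z j * shiftGen n r j),
      Fin.sum_univ_succ (f := fun j : Fin (k + 2) => z j)]
    simp only [shiftGen, Fin.cons_zero, Fin.cons_succ, mul_add,
      Finset.sum_add_distrib, add_mul, Finset.sum_mul]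
    omega
  rw [hz, expand, hsum]
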